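/- (Soundness of the 3-Partition reduction.) Let n and B be positive integers and let a₁, …, a_{3n} be positive integers with B/4 < a_i < B/2 for every i and ∑_{i=1}^{3n} a_i = nB. Let V₁, …, V_{3n} be pairwise disjoint finite sets with |V_i| = a_i, and let H₁, …, H_n be pairwise disjoint finite sets with |H_j| = B for every j. Suppose f is a bijection from V₁ ∪ ⋯ ∪ V_{3n} onto H₁ ∪ ⋯ ∪ H_n such that for every i the image f(V_i) is contained in a single set H_{j(i)}. Then the assignment i ↦ j(i) partitions {1,…,3n} into n classes, each class has exactly 3 elements, and for every j, ∑_{i : j(i) = j} a_i = B; i.e., the numbers a₁,…,a_{3n} admit a valid 3-Partition. Consequently, if the 3-Partition instance has no solution, then every bijection of the star vertices onto the holes must split some V_i between two different holes. -/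

import Mathlib

open scoped BigOperators

/-- Soundness of the 3-Partition reduction: if the star vertex sets `V i` (of sizes
`a i` with `B/4 < a i < B/2` and `∑ a i = n·B`) are mapped by a bijection `f` onto the
union of the `n` holes `H j` (each of `B` points) in such a way that each `V i` lands
inside a single hole `H (j i)`, then `i ↦ j i` partitions the indices into `n` triples
each of whose `a`-values sum to exactly `B`; i.e. the 3-Partition instance is solvable. -/
theorem three_partition_soundness
    (n B : ℕ) (hn : 0 < n) (hB : 0 < B)
    (a : Fin (3 * n) → ℕ) (ha : ∀ i, 0 < a i)
    (hlo : ∀ i, (B : ℝ) / 4 < (a i : ℝ)) (hhi : ∀ i, (a i : ℝ) < (B : ℝ) / 2)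
    (hsum : ∑ i, a i = n * B)
    (X Y : Type) [DecidableEq X] [DecidableEq Y]
    (V : Fin (3 * n) → Finset X) (hVcard : ∀ i, (V i).card = a i)
    (hVdisj : ∀ i i' : Fin (3 * n), i ≠ i' → Disjoint (V i) (V i'))
    (H : Fin n → Finset Y) (hHcard : ∀ j, (H j).card = B)
    (hHdisj : ∀ j j' : Fin n, j ≠ j' → Disjoint (H j) (H j'))
    (f : X → Y)
    (hbij : Set.BijOn f ↑(Finset.univ.biUnion V) ↑(Finset.univ.biUnion H))
    (j : Fin (3 * n) → Fin n)
    (hj : ∀ i, ∀ x ∈ V i, f x ∈ H (j i)) :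
    ∀ jj : Fin n,
      (Finset.univ.filter (fun i => j i = jj)).card = 3 ∧
      ∑ i ∈ Finset.univ.filter (fun i => j i = jj), a i = B := by

  have hinj : Set.InjOn f ↑(Finset.univ.biUnion V) := hbij.injOn
  have hmem : ∀ i, ∀ x ∈ V i, x ∈ (↑(Finset.univ.biUnion V) : Set X) := by
    intro i x hx
    exact Finset.mem_coe.mpr (Finset.mem_biUnion.mpr ⟨i, Finset.mem_univ _, hx⟩)
  have himgcard : ∀ i, ((V i).image f).card = a i := by
    intro i
    rw [Finset.card_image_of_injOn (fun x hx y hy hxy => hinj (hmem i x hx) (hmem i y hy) hxy)]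
    exact hVcard i
  have hdisjimg : ∀ i i' : Fin (3 * n), i ≠ i' →
      Disjoint ((V i).image f) ((V i').image f) := by
    intro i i' hne
    rw [Finset.disjoint_left]
    rintro y hy hy'
    obtain ⟨x, hx, rfl⟩ := Finset.mem_image.mp hy
    obtain ⟨x', hx', hxx⟩ := Finset.mem_image.mp hy'
    have := hinj (hmem i' x' hx') (hmem i x hx) hxx
    subst this
    exact Finset.disjoint_left.mp (hVdisj i i' hne) hx hx'
  set S : Fin n → Finset (Fin (3 * n)) :=
    fun jj => Finset.univ.filter (fun i => j i = jj) with hS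
  have hle : ∀ jj, ∑ i ∈ S jj, a i ≤ B := by
    intro jj
    have hsub : (S jj).biUnion (fun i => (V i).image f) ⊆ H jj := by
      intro y hy
      obtain ⟨i, hi, hyi⟩ := Finset.mem_biUnion.mp hy
      obtain ⟨x, hx, rfl⟩ := Finset.mem_image.mp hyi
      have hji : j i = jj := (Finset.mem_filter.mp hi).2
      simpa [hji] using hj i x hx
    calc ∑ i ∈ S jj, a i = ∑ i ∈ S jj, ((V i).image f).card := by
          simp [himgcard]
      _ = ((S jj).biUnion (fun i => (V i).image f)).card :=
          (Finset.card_biUnion (fun i _ i' _ hne => hdisjimg i i' hne)).symm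
      _ ≤ (H jj).card := Finset.card_le_card hsub
      _ = B := hHcard jj
  have htot : ∑ jj, ∑ i ∈ S jj, a i = n * B := by
    rw [hS]
    rw [Finset.sum_fiberwise_of_maps_to (fun i _ => Finset.mem_univ (j i)) a]
    exact hsum
  have heq : ∀ jj, ∑ i ∈ S jj, a i = B := by
    by_contra hcon
    push_neg at hcon
    obtain ⟨jj0, hne⟩ := hcon
    have hlt : ∑ jj, ∑ i ∈ S jj, a i < ∑ _jj : Fin n, B :=
      Finset.sum_lt_sum (fun jj _ => hle jj)
        ⟨jj0, Finset.mem_univ _, lt_of_le_of_ne (hle jj0) hne⟩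
    rw [htot, Finset.sum_const, Finset.card_univ, Fintype.card_fin, smul_eq_mul] at hlt
    exact lt_irrefl _ hlt
  intro jj
  refine ⟨?_, heq jj⟩
  show (S jj).card = 3
  have hne : (S jj).Nonempty := by
    rcases Finset.eq_empty_or_nonempty (S jj) with h | h
    · exfalso
      have := heq jj
      rw [h, Finset.sum_empty] at this
      omega
    · exact h
  have hsumR : ∑ i ∈ S jj, (a i : ℝ) = (B : ℝ) := by
    exact_mod_cast congrArg (Nat.cast : ℕ → ℝ) (heq jj)
  have h1 : ((S jj).card : ℝ) * ((B : ℝ) / 4) < (B : ℝ) := by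
    calc ((S jj).card : ℝ) * ((B : ℝ) / 4) = ∑ _i ∈ S jj, ((B : ℝ) / 4) := by
          rw [Finset.sum_const, nsmul_eq_mul]
      _ < ∑ i ∈ S jj, (a i : ℝ) :=
          Finset.sum_lt_sum_of_nonempty hne (fun i _ => hlo i)
      _ = (B : ℝ) := hsumR
  have h2 : (B : ℝ) < ((S jj).card : ℝ) * ((B : ℝ) / 2) := by
    calc (B : ℝ) = ∑ i ∈ S jj, (a i : ℝ) := hsumR.symm
      _ < ∑ _i ∈ S jj, ((B : ℝ) / 2) :=
          Finset.sum_lt_sum_of_nonempty hne (fun i _ => hhi i)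
      _ = ((S jj).card : ℝ) * ((B : ℝ) / 2) := by rw [Finset.sum_const, nsmul_eq_mul]
  have hBpos : (0 : ℝ) < (B : ℝ) := by exact_mod_cast hB
  have hk4 : ((S jj).card : ℝ) < 4 := by nlinarith
  have hk2 : (2 : ℝ) < ((S jj).card : ℝ) := by nlinarith
  have h4 : (S jj).card < 4 := by exact_mod_cast hk4
  have h2' : 2 < (S jj).card := by exact_mod_cast hk2
  omega
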